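/- Let M be a metric space and γ : [0,1] → M a continuous, non-constant map, and let K = γ([0,1]). Then K is a decomposable continuum: K is compact and connected, and there exist compact connected sets K₁ and K₂, each a proper subset of K, with K = K₁ ∪ K₂. -/
import Mathlib

open Set

/-- Greedy growth lemma: a connected subfamily union can be grown one piece at a time. -/
lemma stmt9_grow {M : Type*} [MetricSpace M] (C : ℕ → Set M) (F : Finset ℕ)
    (hcpt : ∀ i ∈ F, IsCompact (C i)) (hconn : ∀ i ∈ F, IsConnected (C i))
    (hK : IsConnected (⋃ i ∈ F, C i)) :
    ∀ k (G : Finset ℕ), G ⊆ F → G.Nonempty → IsConnected (⋃ i ∈ G, C i) →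
      G.card + k ≤ F.card →
      ∃ H : Finset ℕ, G ⊆ H ∧ H ⊆ F ∧ H.card = G.card + k ∧
        IsConnected (⋃ i ∈ H, C i) := by
  intro k
  induction k with
  | zero => exact fun G hGF hGne hGconn _ => ⟨G, le_refl _, hGF, rfl, hGconn⟩
  | succ k ih =>
    intro G hGF hGne hGconn hcard
    obtain ⟨H, hGH, hHF, hHcard, hHconn⟩ := ih G hGF hGne hGconn (by omega)
    have hne : (F \ H).Nonempty := by
      rw [Finset.sdiff_nonempty]
      intro hFH
      have := Finset.card_le_card hFH
      omega
    have hmeet : ∃ j ∈ F \ H, ((⋃ i ∈ H, C i) ∩ C j).Nonempty := by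
      by_contra h
      push_neg at h
      have hA : IsClosed (⋃ i ∈ H, C i) :=
        isClosed_biUnion_finset fun i hi => (hcpt i (hHF hi)).isClosed
      have hB : IsClosed (⋃ i ∈ F \ H, C i) :=
        isClosed_biUnion_finset fun i hi => (hcpt i (Finset.mem_sdiff.mp hi).1).isClosed
      have hsub : (⋃ i ∈ F, C i) ⊆ (⋃ i ∈ H, C i) ∪ ⋃ i ∈ F \ H, C i := by
        intro x hx
        obtain ⟨i, hiF, hxi⟩ := mem_iUnion₂.mp hx
        by_cases hiH : i ∈ H
        · exact Or.inl (mem_iUnion₂.mpr ⟨i, hiH, hxi⟩)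
        · exact Or.inr (mem_iUnion₂.mpr ⟨i, Finset.mem_sdiff.mpr ⟨hiF, hiH⟩, hxi⟩)
      obtain ⟨i₀, hi₀⟩ := hGne
      have hAne : ((⋃ i ∈ F, C i) ∩ ⋃ i ∈ H, C i).Nonempty := by
        obtain ⟨x, hx⟩ := (hconn i₀ (hGF hi₀)).nonempty
        exact ⟨x, mem_iUnion₂.mpr ⟨i₀, hGF hi₀, hx⟩, mem_iUnion₂.mpr ⟨i₀, hGH hi₀, hx⟩⟩
      obtain ⟨j₀, hj₀⟩ := hne
      have hBne : ((⋃ i ∈ F, C i) ∩ ⋃ i ∈ F \ H, C i).Nonempty := by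
        obtain ⟨x, hx⟩ := (hconn j₀ (Finset.mem_sdiff.mp hj₀).1).nonempty
        exact ⟨x, mem_iUnion₂.mpr ⟨j₀, (Finset.mem_sdiff.mp hj₀).1, hx⟩,
          mem_iUnion₂.mpr ⟨j₀, hj₀, hx⟩⟩
      obtain ⟨x, -, hxA, hxB⟩ :=
        isPreconnected_closed_iff.mp hK.isPreconnected _ _ hA hB hsub hAne hBne
      obtain ⟨j, hjFH, hxj⟩ := mem_iUnion₂.mp hxB
      have hj := h j hjFH
      rw [Set.eq_empty_iff_forall_notMem] at hj
      exact hj x ⟨hxA, hxj⟩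
    obtain ⟨j, hjFH, hjmeet⟩ := hmeet
    have hjF := (Finset.mem_sdiff.mp hjFH).1
    have hjH := (Finset.mem_sdiff.mp hjFH).2
    refine ⟨insert j H, hGH.trans (Finset.subset_insert _ _),
      Finset.insert_subset hjF hHF, ?_, ?_⟩
    · rw [Finset.card_insert_of_notMem hjH]; omega
    · rw [Finset.set_biUnion_insert]
      have := hHconn.union (t := C j) hjmeet (hconn j hjF)
      rwa [union_comm] at this

theorem stmt9 {M : Type*} [MetricSpace M] (γ : Set.Icc (0 : ℝ) 1 → M)
    (hcont : Continuous γ) (hnc : ∃ s t : Set.Icc (0 : ℝ) 1, γ s ≠ γ t) :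
    IsCompact (Set.range γ) ∧ IsConnected (Set.range γ) ∧
    ∃ K₁ K₂ : Set M,
      IsCompact K₁ ∧ IsConnected K₁ ∧ IsCompact K₂ ∧ IsConnected K₂ ∧
      K₁ ⊂ Set.range γ ∧ K₂ ⊂ Set.range γ ∧ K₁ ∪ K₂ = Set.range γ := by
  haveI : ConnectedSpace (Set.Icc (0:ℝ) 1) :=
    Subtype.connectedSpace ⟨nonempty_Icc.mpr zero_le_one, isPreconnected_Icc⟩
  obtain ⟨s, t, hst⟩ := hnc
  set K := Set.range γ with hKdef
  have hKcpt : IsCompact K := isCompact_range hcont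
  have hKconn : IsConnected K := isConnected_range hcont
  refine ⟨hKcpt, hKconn, ?_⟩
  set D := dist (γ s) (γ t) with hDdef
  have hD : 0 < D := dist_pos.mpr hst
  -- uniform continuity
  have huc : UniformContinuous γ := CompactSpace.uniformContinuous_of_continuous hcont
  obtain ⟨δ, hδ, hδ'⟩ := Metric.uniformContinuous_iff.mp huc D hD
  -- the extension to ℝ
  set η : ℝ → M := fun x => γ (Set.projIcc 0 1 zero_le_one x) with hηdef
  have hηcont : Continuous η := hcont.comp continuous_projIcc
  have hηdist : ∀ x y : ℝ, dist x y < δ → dist (η x) (η y) < D := by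
    intro x y hxy
    apply hδ'
    calc dist (Set.projIcc 0 1 zero_le_one x) (Set.projIcc 0 1 zero_le_one y)
        ≤ dist x y := by
          simpa using (LipschitzWith.projIcc (zero_le_one)).dist_le_mul x y
      _ < δ := hxy
  have hηrange : ∀ x : ℝ, η x ∈ K := fun x => Set.mem_range_self _
  have hrange_eq : K = η '' Icc 0 1 := by
    ext y
    constructor
    · rintro ⟨⟨x, hx⟩, rfl⟩
      exact ⟨x, hx, by simp [hηdef, Set.projIcc_of_mem zero_le_one hx]⟩
    · rintro ⟨x, hx, rfl⟩
      exact hηrange x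
  -- choose n with 1/n < δ
  obtain ⟨n, hn⟩ := exists_nat_gt (1/δ)
  have hnpos : 0 < n := by
    rcases Nat.eq_zero_or_pos n with h | h
    · subst h
      simp only [Nat.cast_zero] at hn
      exact absurd hn (not_lt.mpr (le_of_lt (by positivity)))
    · exact h
  have hnR : (0:ℝ) < n := by exact_mod_cast hnpos
  have hinv : (1:ℝ)/n < δ := by
    rw [div_lt_iff₀ hnR]
    rw [div_lt_iff₀ hδ] at hn
    nlinarith
  -- pieces
  set C : ℕ → Set M := fun j => η '' Icc ((j:ℝ)/n) (((j:ℝ)+1)/n) with hCdef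
  have hIcc_le : ∀ j : ℕ, (j:ℝ)/n ≤ ((j:ℝ)+1)/n := by
    intro j
    gcongr
    linarith
  have hCne : ∀ j, (C j).Nonempty := fun j =>
    ⟨η ((j:ℝ)/n), ⟨(j:ℝ)/n, ⟨le_refl _, hIcc_le j⟩, rfl⟩⟩
  have hCconn : ∀ j, IsConnected (C j) := fun j =>
    (isConnected_Icc (hIcc_le j)).image _ hηcont.continuousOn
  have hCcpt : ∀ j, IsCompact (C j) := fun j =>
    (isCompact_Icc).image hηcont
  have hCsub : ∀ j, C j ⊆ K := by
    rintro j y ⟨x, -, rfl⟩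
    exact hηrange x
  have hCdiam : ∀ j, ∀ x ∈ C j, ∀ y ∈ C j, dist x y < D := by
    rintro j x ⟨a, ha, rfl⟩ y ⟨b, hb, rfl⟩
    apply hηdist
    rw [Real.dist_eq]
    have h1 : |a - b| ≤ ((j:ℝ)+1)/n - (j:ℝ)/n :=
      abs_sub_le_iff.mpr ⟨by linarith [ha.1, ha.2, hb.1, hb.2], by linarith [ha.1, ha.2, hb.1, hb.2]⟩
    have h2 : ((j:ℝ)+1)/n - (j:ℝ)/n = 1/n := by rw [div_sub_div_same]; norm_num
    calc |a - b| ≤ 1/n := by rw [← h2]; exact h1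
      _ < δ := hinv
  -- the cover
  have hcover : K = ⋃ j ∈ Finset.range n, C j := by
    rw [hrange_eq]
    apply Set.Subset.antisymm
    · rintro y ⟨x, hx, rfl⟩
      -- find j with j/n ≤ x ≤ (j+1)/n
      obtain ⟨hx0, hx1⟩ := hx
      by_cases hxe : x = 1
      · refine mem_iUnion₂.mpr ⟨n - 1, Finset.mem_range.mpr (by omega), ⟨x, ⟨?_, ?_⟩, rfl⟩⟩
        · subst hxe
          rw [div_le_one hnR]
          have : ((n:ℝ) - 1) ≤ n := by linarith
          calc ((n-1 : ℕ):ℝ) ≤ (n:ℝ) - 1 + 1 - 1 := by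
                push_cast [Nat.cast_sub hnpos]
                ring_nf
                rfl
            _ ≤ (n:ℝ) := by linarith
        · subst hxe
          rw [le_div_iff₀ hnR]
          have : ((n-1:ℕ):ℝ) = (n:ℝ) - 1 := by
            push_cast [Nat.cast_sub hnpos]; ring
          rw [this]; linarith
      · have hxlt : x < 1 := lt_of_le_of_ne hx1 hxe
        set j : ℕ := ⌊x * n⌋.toNat with hjdef
        have hfl0 : (0:ℤ) ≤ ⌊x * n⌋ := Int.floor_nonneg.mpr (by positivity)
        have hjcast : ((j:ℤ)) = ⌊x * n⌋ := Int.toNat_of_nonneg hfl0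
        have hjle : (j:ℝ) ≤ x * n := by
          have := Int.floor_le (x * n)
          rw [← hjcast] at this
          exact_mod_cast this
        have hjgt : x * n < (j:ℝ) + 1 := by
          have := Int.lt_floor_add_one (x * n)
          rw [← hjcast] at this
          exact_mod_cast this
        have hjn : j < n := by
          have : x * n < n := by nlinarith
          have h2 : (j:ℝ) < n := lt_of_le_of_lt hjle this
          exact_mod_cast h2
        refine mem_iUnion₂.mpr ⟨j, Finset.mem_range.mpr hjn, ⟨x, ⟨?_, ?_⟩, rfl⟩⟩
        · rw [div_le_iff₀ hnR]; linarith
        · rw [le_div_iff₀ hnR]; linarith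
    · intro y hy
      obtain ⟨j, hj, x, hx, rfl⟩ := mem_iUnion₂.mp hy
      rw [Finset.mem_range] at hj
      refine ⟨x, ⟨?_, ?_⟩, rfl⟩
      · have : (0:ℝ) ≤ (j:ℝ)/n := by positivity
        linarith [hx.1]
      · have : ((j:ℝ)+1)/n ≤ 1 := by
          rw [div_le_one hnR]
          have : (j:ℝ) + 1 ≤ n := by exact_mod_cast Nat.succ_le_of_lt hj
          linarith
        linarith [hx.2]
  -- minimal covering subfamily
  classical
  set P : Finset (Finset ℕ) :=
    (Finset.range n).powerset.filter (fun G => ⋃ j ∈ G, C j = K) with hPdef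
  have hPne : P.Nonempty :=
    ⟨Finset.range n, Finset.mem_filter.mpr ⟨Finset.mem_powerset.mpr (Finset.Subset.refl _), hcover.symm⟩⟩
  obtain ⟨G, hGP, hGmin⟩ := P.exists_min_image Finset.card hPne
  have hGcov : ⋃ j ∈ G, C j = K := (Finset.mem_filter.mp hGP).2
  have hGsub : G ⊆ Finset.range n := Finset.mem_powerset.mp (Finset.mem_filter.mp hGP).1
  -- each member of G has a private point
  have hpriv : ∀ m ∈ G, ∃ x ∈ C m, x ∉ ⋃ j ∈ G.erase m, C j := by
    intro m hm
    by_contra h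
    push_neg at h
    have hcov' : ⋃ j ∈ G.erase m, C j = K := by
      apply Set.Subset.antisymm
      · apply Set.Subset.trans ?_ hGcov.le
        exact Set.biUnion_subset_biUnion_left (by exact_mod_cast Finset.erase_subset m G)
      · rw [← hGcov]
        intro y hy
        obtain ⟨j, hj, hyj⟩ := mem_iUnion₂.mp hy
        by_cases hjm : j = m
        · subst hjm
          exact h y hyj
        · exact mem_iUnion₂.mpr ⟨j, Finset.mem_erase.mpr ⟨hjm, hj⟩, hyj⟩
    have hmemP : G.erase m ∈ P := Finset.mem_filter.mpr
      ⟨Finset.mem_powerset.mpr ((Finset.erase_subset m G).trans hGsub), hcov'⟩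
    have := hGmin _ hmemP
    have := Finset.card_erase_of_mem hm
    have := Finset.card_pos.mpr ⟨m, hm⟩
    omega
  -- G has at least 2 elements
  have hsK : γ s ∈ K := Set.mem_range_self _
  have htK : γ t ∈ K := Set.mem_range_self _
  have hGcard : 2 ≤ G.card := by
    by_contra h
    push_neg at h
    interval_cases hc : G.card
    · rw [Finset.card_eq_zero] at hc
      subst hc
      simp only [Finset.notMem_empty, Set.iUnion_of_empty, Set.iUnion_empty] at hGcov
      rw [← hGcov] at hsK
      exact hsK
    · rw [Finset.card_eq_one] at hc
      obtain ⟨m, rfl⟩ := hc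
      simp only [Finset.mem_singleton, Set.iUnion_iUnion_eq_left] at hGcov
      rw [← hGcov] at hsK htK
      exact absurd (hCdiam m _ hsK _ htK) (lt_irrefl D)
  -- setup for grow lemma
  have hconnG : IsConnected (⋃ i ∈ G, C i) := hGcov ▸ hKconn
  obtain ⟨i₀, hi₀⟩ := Finset.card_pos.mp (by omega : 0 < G.card)
  have hsingconn : IsConnected (⋃ i ∈ ({i₀} : Finset ℕ), C i) := by
    simp only [Finset.mem_singleton, Set.iUnion_iUnion_eq_left]
    exact hCconn i₀
  obtain ⟨H, hH0, hHG, hHcard, hHconn⟩ :=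
    stmt9_grow C G (fun i _ => hCcpt i) (fun i _ => hCconn i) hconnG (G.card - 2)
      {i₀} (Finset.singleton_subset_iff.mpr hi₀) ⟨i₀, Finset.mem_singleton_self i₀⟩
      hsingconn (by simp; omega)
  rw [Finset.card_singleton] at hHcard
  -- the missing element m
  have hone : (G \ H).card = 1 := by
    rw [Finset.card_sdiff_of_subset hHG]
    omega
  obtain ⟨m, hm⟩ := Finset.card_eq_one.mp hone
  have hmG : m ∈ G := (Finset.mem_sdiff.mp (hm ▸ Finset.mem_singleton_self m)).1
  have hmH : m ∉ H := (Finset.mem_sdiff.mp (hm ▸ Finset.mem_singleton_self m)).2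
  have hHeq : H = G.erase m := by
    apply Finset.eq_of_subset_of_card_le
    · intro x hx
      exact Finset.mem_erase.mpr ⟨fun hxm => hmH (hxm ▸ hx), hHG hx⟩
    · rw [Finset.card_erase_of_mem hmG]
      omega
  -- define the decomposition
  refine ⟨⋃ j ∈ G.erase m, C j, C m, ?_, ?_, hCcpt m, hCconn m, ?_, ?_, ?_⟩
  · exact (G.erase m).finite_toSet.isCompact_biUnion fun i _ => hCcpt i
  · rw [← hHeq]; exact hHconn
  · constructor
    · intro y hy
      obtain ⟨j, hj, hyj⟩ := mem_iUnion₂.mp hy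
      exact hCsub j hyj
    · intro hsup
      obtain ⟨x, hxm, hxpriv⟩ := hpriv m hmG
      exact hxpriv (hsup (hCsub m hxm))
  · constructor
    · exact hCsub m
    · intro hsup
      have h1 := hsup hsK
      have h2 := hsup htK
      exact absurd (hCdiam m _ h1 _ h2) (lt_irrefl D)
  · rw [← hGcov, union_comm, ← Finset.set_biUnion_insert, Finset.insert_erase hmG]
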